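/- If u₀* ∈ H is the minimizer of J, then there exists λ ∈ H such that ℒ*(ℒu₀* − u_T) + τ u₀* + λ = 0 in H, and for μ-almost every x one has |λ(x)| ≤ β, with λ(x) = β · u₀*(x)/|u₀*(x)| whenever u₀*(x) ≠ 0. -/

import Mathlib

open MeasureTheory Filter Topology RealInnerProductSpace

lemma aux_abs_eq {a b t : ℝ} (ht : 0 < t) (h : t * |b| < |a|) :
    |a + t * b| = |a| + t * (b * (a / |a|)) := by
  rcases lt_trichotomy a 0 with ha | ha | ha
  · rw [abs_of_neg ha] at h ⊢
    have h1 : a + t * b < 0 := by nlinarith [le_abs_self b]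
    rw [abs_of_neg h1]
    have : a ≠ 0 := ha.ne
    field_simp
    ring
  · exfalso; rw [ha, abs_zero] at h
    nlinarith [abs_nonneg b]
  · rw [abs_of_pos ha] at h ⊢
    have h1 : 0 < a + t * b := by nlinarith [neg_abs_le b]
    rw [abs_of_pos h1]
    have : a ≠ 0 := ha.ne'
    field_simp

lemma aux_tendsto {t : ℕ → ℝ} (ht : ∀ n, 0 < t n) (ht0 : Tendsto t atTop (𝓝 0)) (a b : ℝ) :
    Tendsto (fun n => (|a + t n * b| - |a|) / t n) atTop
      (𝓝 (if a = 0 then |b| else b * (a / |a|))) := by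
  rcases eq_or_ne a 0 with ha | ha
  · rw [if_pos ha]
    have : ∀ n, (|a + t n * b| - |a|) / t n = |b| := by
      intro n
      rw [ha, abs_zero, zero_add, abs_mul, abs_of_pos (ht n), sub_zero,
        mul_div_cancel_left₀ _ (ht n).ne']
    simpa [this] using tendsto_const_nhds (α := ℝ) (f := atTop (α := ℕ))
  · rw [if_neg ha]
    have hev : ∀ᶠ n in atTop, t n * |b| < |a| := by
      rcases eq_or_ne b 0 with hb | hb
      · exact Eventually.of_forall fun n => by simpa [hb] using abs_pos.mpr ha
      · have hpos : (0:ℝ) < |a| / |b| := div_pos (abs_pos.mpr ha) (abs_pos.mpr hb)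
        filter_upwards [ht0.eventually_lt_const hpos] with n hn
        exact (lt_div_iff₀ (abs_pos.mpr hb)).mp hn
    have hev2 : ∀ᶠ n in atTop, (|a + t n * b| - |a|) / t n = b * (a / |a|) := by
      filter_upwards [hev] with n hn
      rw [aux_abs_eq (ht n) hn, add_sub_cancel_left, mul_div_cancel_left₀ _ (ht n).ne']
    exact Tendsto.congr' (hev2.mono fun n hn => hn.symm) tendsto_const_nhds

lemma aux_integrable_mul {X : Type*} [MeasurableSpace X] {μ : Measure X} {f g : X → ℝ}
    (hf : MemLp f 2 μ) (hg : MemLp g 2 μ) : Integrable (fun x => f x * g x) μ := by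
  have h : MemLp (f • g) 1 μ := hg.smul hf
  exact memLp_one_iff_integrable.mp h

/-- The cost functional `J(u₀) = ½‖ℒu₀ − u_T‖² + (τ/2)‖u₀‖² + β∫|u₀| dμ` on `H = L²(μ; ℝ)`. -/
noncomputable def J {X : Type*} [MeasurableSpace X] (μ : Measure X)
    (L : Lp ℝ 2 μ →L[ℝ] Lp ℝ 2 μ) (uT : Lp ℝ 2 μ) (τ β : ℝ) (u₀ : Lp ℝ 2 μ) : ℝ :=
  (1 / 2) * ‖L u₀ - uT‖ ^ 2 + (τ / 2) * ‖u₀‖ ^ 2 + β * ∫ x, |u₀ x| ∂μ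

set_option maxHeartbeats 1000000 in
theorem first_order_optimality {X : Type*} [MeasurableSpace X] (μ : Measure X)
    [IsFiniteMeasure μ] (L : Lp ℝ 2 μ →L[ℝ] Lp ℝ 2 μ) (uT : Lp ℝ 2 μ)
    (τ β : ℝ) (hτ : 0 < τ) (hβ : 0 < β) (u₀star : Lp ℝ 2 μ)
    (hmin : ∀ u₀ : Lp ℝ 2 μ, J μ L uT τ β u₀star ≤ J μ L uT τ β u₀) :
    ∃ lam : Lp ℝ 2 μ,
      L.adjoint (L u₀star - uT) + τ • u₀star + lam = 0 ∧
      ∀ᵐ x ∂μ, |lam x| ≤ β ∧ (u₀star x ≠ 0 → lam x = β * u₀star x / |u₀star x|) := by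
  classical
  set w : Lp ℝ 2 μ := L.adjoint (L u₀star - uT) + τ • u₀star with hw
  set lam : Lp ℝ 2 μ := -w with hlam
  have hwl : w = -lam := by rw [hlam, neg_neg]
  refine ⟨lam, by simp [hlam], ?_⟩
  have hf_meas : Measurable (u₀star : X → ℝ) := (Lp.stronglyMeasurable u₀star).measurable
  have hlam_meas : Measurable (lam : X → ℝ) := (Lp.stronglyMeasurable lam).measurable
  have hf_mem : MemLp (u₀star : X → ℝ) 2 μ := Lp.memLp u₀star
  have hlam_mem : MemLp (lam : X → ℝ) 2 μ := Lp.memLp lam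
  have hf_int : Integrable (u₀star : X → ℝ) μ := hf_mem.integrable one_le_two
  -- Step A : directional-derivative inequality for Lp test elements
  have keyA : ∀ v : Lp ℝ 2 μ,
      (0:ℝ) ≤ ⟪w, v⟫ + β * ∫ x, (if u₀star x = 0 then |v x|
        else v x * (u₀star x / |u₀star x|)) ∂μ := by
    intro v
    have hg_mem : MemLp (v : X → ℝ) 2 μ := Lp.memLp v
    have hg_meas : Measurable (v : X → ℝ) := (Lp.stronglyMeasurable v).measurable
    have hg_int : Integrable (v : X → ℝ) μ := hg_mem.integrable one_le_two
    have hstep : ∀ s : ℝ, 0 < s →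
        0 ≤ ⟪w, v⟫ + s / 2 * (‖L v‖ ^ 2 + τ * ‖v‖ ^ 2) +
          β * ((∫ x, |u₀star x + s * v x| ∂μ - ∫ x, |u₀star x| ∂μ) / s) := by
      intro s hs
      have hmin' := hmin (u₀star + s • v)
      have hI : ∫ x, |(u₀star + s • v) x| ∂μ = ∫ x, |u₀star x + s * v x| ∂μ := by
        refine integral_congr_ae ?_
        filter_upwards [Lp.coeFn_add u₀star (s • v), Lp.coeFn_smul s v] with x h1 h2
        rw [h1, Pi.add_apply, h2, Pi.smul_apply, smul_eq_mul]
      have e1 : ‖L (u₀star + s • v) - uT‖ ^ 2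
          = ‖L u₀star - uT‖ ^ 2 + 2 * (s * ⟪L u₀star - uT, L v⟫) + s ^ 2 * ‖L v‖ ^ 2 := by
        have harr : L (u₀star + s • v) - uT = (L u₀star - uT) + s • (L v) := by
          rw [map_add, ContinuousLinearMap.map_smul]; abel
        rw [harr, norm_add_sq_real, real_inner_smul_right, norm_smul, mul_pow,
          Real.norm_eq_abs, sq_abs]
      have e2 : ‖u₀star + s • v‖ ^ 2
          = ‖u₀star‖ ^ 2 + 2 * (s * ⟪u₀star, v⟫) + s ^ 2 * ‖v‖ ^ 2 := by
        rw [norm_add_sq_real, real_inner_smul_right, norm_smul, mul_pow,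
          Real.norm_eq_abs, sq_abs]
      have e3 : ⟪w, v⟫ = ⟪L u₀star - uT, L v⟫ + τ * ⟪u₀star, v⟫ := by
        rw [hw, inner_add_left, ContinuousLinearMap.adjoint_inner_left, real_inner_smul_left]
      have key : J μ L uT τ β (u₀star + s • v) - J μ L uT τ β u₀star
          = s * (⟪w, v⟫ + s / 2 * (‖L v‖ ^ 2 + τ * ‖v‖ ^ 2) +
              β * ((∫ x, |u₀star x + s * v x| ∂μ - ∫ x, |u₀star x| ∂μ) / s)) := by
        simp only [J, hI, e1, e2, e3]
        field_simp
        ring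
      have h0 : 0 ≤ J μ L uT τ β (u₀star + s • v) - J μ L uT τ β u₀star :=
        sub_nonneg.mpr hmin'
      rw [key] at h0
      by_contra hc
      push_neg at hc
      nlinarith
    set t : ℕ → ℝ := fun n => 1 / (n + 1) with htdef
    have ht : ∀ n, 0 < t n := fun n => by positivity
    have ht0 : Tendsto t atTop (𝓝 0) := tendsto_one_div_add_atTop_nhds_zero_nat
    have habs_int : ∀ s : ℝ, Integrable (fun x => |u₀star x + s * v x|) μ :=
      fun s => (hf_int.add (hg_int.const_mul s)).abs
    have hquot : ∀ n, (∫ x, |u₀star x + t n * v x| ∂μ - ∫ x, |u₀star x| ∂μ) / t n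
        = ∫ x, (|u₀star x + t n * v x| - |u₀star x|) / t n ∂μ := by
      intro n
      rw [← integral_sub (habs_int (t n)) hf_int.abs]
      exact (integral_div _ _).symm
    have hDC : Tendsto (fun n => ∫ x, (|u₀star x + t n * v x| - |u₀star x|) / t n ∂μ) atTop
        (𝓝 (∫ x, (if u₀star x = 0 then |v x| else v x * (u₀star x / |u₀star x|)) ∂μ)) := by
      refine tendsto_integral_of_dominated_convergence (fun x => |v x|) ?_ hg_int.abs ?_ ?_
      · intro n
        exact (((hf_meas.add (hg_meas.const_mul (t n))).abs.sub hf_meas.abs).div_const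
          (t n)).aestronglyMeasurable
      · intro n
        refine Eventually.of_forall fun x => ?_
        rw [Real.norm_eq_abs, abs_div, abs_of_pos (ht n), div_le_iff₀ (ht n)]
        have hb1 : |(|u₀star x + t n * v x| - |u₀star x|)| ≤ |u₀star x + t n * v x - u₀star x| :=
          abs_abs_sub_abs_le_abs_sub _ _
        have hb2 : |u₀star x + t n * v x - u₀star x| = |v x| * t n := by
          rw [add_sub_cancel_left, abs_mul, abs_of_pos (ht n)]; ring
        exact hb2 ▸ hb1
      · exact Eventually.of_forall fun x => aux_tendsto ht ht0 _ _
    have h1 : Tendsto (fun n => t n / 2 * (‖L v‖ ^ 2 + τ * ‖v‖ ^ 2)) atTop (𝓝 0) := by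
      have hz := (ht0.div_const 2).mul_const (‖L v‖ ^ 2 + τ * ‖v‖ ^ 2)
      rw [zero_div, zero_mul] at hz
      exact hz
    have h2 : Tendsto (fun n => β * ((∫ x, |u₀star x + t n * v x| ∂μ
          - ∫ x, |u₀star x| ∂μ) / t n)) atTop
        (𝓝 (β * ∫ x, (if u₀star x = 0 then |v x|
          else v x * (u₀star x / |u₀star x|)) ∂μ)) := by
      simp only [hquot]
      exact hDC.const_mul β
    have hlim : Tendsto (fun n => ⟪w, v⟫ + t n / 2 * (‖L v‖ ^ 2 + τ * ‖v‖ ^ 2) +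
        β * ((∫ x, |u₀star x + t n * v x| ∂μ - ∫ x, |u₀star x| ∂μ) / t n)) atTop
        (𝓝 (⟪w, v⟫ + β * ∫ x, (if u₀star x = 0 then |v x|
          else v x * (u₀star x / |u₀star x|)) ∂μ)) := by
      have := (tendsto_const_nhds (x := ⟪w, v⟫) (f := atTop (α := ℕ))).add h1 |>.add h2
      simpa using this
    exact ge_of_tendsto' hlim fun n => hstep (t n) (ht n)
  -- Step B : inequality for function-valued test functions
  have keyB : ∀ h : X → ℝ, MemLp h 2 μ →
      ∫ x, lam x * h x ∂μ ≤ β * ∫ x, (if u₀star x = 0 then |h x|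
        else h x * (u₀star x / |u₀star x|)) ∂μ := by
    intro h hh
    have hA := keyA (hh.toLp h)
    have hco := hh.coeFn_toLp
    have hinner : ⟪w, hh.toLp h⟫ = - ∫ x, lam x * h x ∂μ := by
      have hi : ⟪lam, hh.toLp h⟫ = ∫ x, lam x * h x ∂μ := by
        rw [L2.inner_def]
        refine integral_congr_ae ?_
        filter_upwards [hco] with x hx
        rw [hx]
        simp [RCLike.inner_apply, conj_trivial, mul_comm]
      rw [hwl, inner_neg_left, hi]
    have hif : ∫ x, (if u₀star x = 0 then |(hh.toLp h) x|
          else (hh.toLp h) x * (u₀star x / |u₀star x|)) ∂μ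
        = ∫ x, (if u₀star x = 0 then |h x| else h x * (u₀star x / |u₀star x|)) ∂μ := by
      refine integral_congr_ae ?_
      filter_upwards [hco] with x hx
      rw [hx]
    rw [hinner, hif] at hA
    linarith
  -- σ and measurability helpers
  have hmeasσ : Measurable fun x => (u₀star x) / |u₀star x| := hf_meas.div hf_meas.abs
  have hsetf : MeasurableSet {x | u₀star x = 0} := hf_meas (measurableSet_singleton 0)
  have habsσ : ∀ x : X, |(u₀star x / |u₀star x|)| ≤ 1 := by
    intro x
    rcases eq_or_ne (u₀star x) 0 with hx | hx
    · simp [hx]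
    · rw [abs_div, abs_abs, div_self (abs_ne_zero.mpr hx)]
  -- Step 1 : on {u₀star ≠ 0}, lam = β σ
  set h₁ : X → ℝ := fun x => if u₀star x = 0 then 0
      else lam x - β * (u₀star x / |u₀star x|) with hh₁def
  have h₁meas : Measurable h₁ :=
    Measurable.ite hsetf measurable_const (hlam_meas.sub (measurable_const.mul hmeasσ))
  have h₁bound : ∀ x, |h₁ x| ≤ |lam x| + β := by
    intro x
    rw [hh₁def]
    by_cases hx : u₀star x = 0
    · simp only [if_pos hx, abs_zero]
      positivity
    · simp only [if_neg hx]
      calc |lam x - β * (u₀star x / |u₀star x|)| ≤ |lam x| + |β * (u₀star x / |u₀star x|)| :=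
            abs_sub _ _
        _ ≤ |lam x| + β := by
            rw [abs_mul, abs_of_pos hβ]
            nlinarith [habsσ x]
  have h₁mem : MemLp h₁ 2 μ := by
    refine MemLp.of_le (hlam_mem.norm.add (memLp_const β)) h₁meas.aestronglyMeasurable
      (Eventually.of_forall fun x => ?_)
    simp only [Pi.add_apply, Real.norm_eq_abs]
    calc |h₁ x| ≤ |lam x| + β := h₁bound x
      _ ≤ |(|lam x| + β)| := le_abs_self _
  have hint1 : Integrable (fun x => lam x * h₁ x) μ := aux_integrable_mul hlam_mem h₁mem
  have h₁int : Integrable h₁ μ := h₁mem.integrable one_le_two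
  have hD₁int : Integrable (fun x => if u₀star x = 0 then |h₁ x|
      else h₁ x * (u₀star x / |u₀star x|)) μ := by
    refine Integrable.mono h₁int.abs
      (Measurable.ite hsetf h₁meas.abs (h₁meas.mul hmeasσ)).aestronglyMeasurable
      (Eventually.of_forall fun x => ?_)
    by_cases hx : u₀star x = 0
    · simp [hx]
    · simp only [if_neg hx, Real.norm_eq_abs, abs_abs, abs_mul]
      nlinarith [habsσ x, abs_nonneg (h₁ x), abs_nonneg (u₀star x / |u₀star x|)]
  have hpt1 : ∀ x, β * (if u₀star x = 0 then |h₁ x|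
      else h₁ x * (u₀star x / |u₀star x|)) - lam x * h₁ x = -(h₁ x ^ 2) := by
    intro x
    by_cases hx : u₀star x = 0
    · simp [hh₁def, hx]
    · simp only [hh₁def, if_neg hx]
      ring
  have hzero1 : ∫ x, h₁ x ^ 2 ∂μ = 0 := by
    have hk := keyB h₁ h₁mem
    have h2 : 0 ≤ ∫ x, (β * (if u₀star x = 0 then |h₁ x|
        else h₁ x * (u₀star x / |u₀star x|)) - lam x * h₁ x) ∂μ := by
      rw [integral_sub (hD₁int.const_mul β) hint1, integral_const_mul]
      linarith
    have h3 : ∫ x, (β * (if u₀star x = 0 then |h₁ x|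
        else h₁ x * (u₀star x / |u₀star x|)) - lam x * h₁ x) ∂μ = - ∫ x, h₁ x ^ 2 ∂μ := by
      rw [← integral_neg]
      exact integral_congr_ae (Eventually.of_forall fun x => by simp only [hpt1 x])
    have h4 : 0 ≤ ∫ x, h₁ x ^ 2 ∂μ := integral_nonneg fun x => sq_nonneg _
    linarith
  have hae1 : ∀ᵐ x ∂μ, h₁ x = 0 := by
    have := (integral_eq_zero_iff_of_nonneg (fun x => sq_nonneg (h₁ x))
      h₁mem.integrable_sq).mp hzero1
    filter_upwards [this] with x hx
    exact sq_eq_zero_iff.mp hx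
  -- Step 2 : on {u₀star = 0}, |lam| ≤ β
  set B : Set X := {x | u₀star x = 0} ∩ {x | β < |lam x|} with hBdef
  have hBmeas : MeasurableSet B :=
    hsetf.inter (measurableSet_lt measurable_const hlam_meas.abs)
  set h₂ : X → ℝ := fun x => if x ∈ B then lam x / |lam x| else 0 with hh₂def
  have h₂meas : Measurable h₂ :=
    Measurable.ite hBmeas (hlam_meas.div hlam_meas.abs) measurable_const
  have habsτ : ∀ x : X, |(lam x / |lam x|)| ≤ 1 := by
    intro x
    rcases eq_or_ne (lam x) 0 with hx | hx
    · simp [hx]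
    · rw [abs_div, abs_abs, div_self (abs_ne_zero.mpr hx)]
  have h₂mem : MemLp h₂ 2 μ := by
    refine MemLp.of_le (memLp_const (1:ℝ)) h₂meas.aestronglyMeasurable
      (Eventually.of_forall fun x => ?_)
    simp only [Real.norm_eq_abs, abs_one]
    rw [hh₂def]
    by_cases hx : x ∈ B
    · simp only [if_pos hx]; exact habsτ x
    · simp [if_neg hx]
  have hint2 : Integrable (fun x => lam x * h₂ x) μ := aux_integrable_mul hlam_mem h₂mem
  have h₂int : Integrable h₂ μ := h₂mem.integrable one_le_two
  have hD₂int : Integrable (fun x => if u₀star x = 0 then |h₂ x|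
      else h₂ x * (u₀star x / |u₀star x|)) μ := by
    refine Integrable.mono h₂int.abs
      (Measurable.ite hsetf h₂meas.abs (h₂meas.mul hmeasσ)).aestronglyMeasurable
      (Eventually.of_forall fun x => ?_)
    by_cases hx : u₀star x = 0
    · simp [hx]
    · simp only [if_neg hx, Real.norm_eq_abs, abs_abs, abs_mul]
      nlinarith [habsσ x, abs_nonneg (h₂ x), abs_nonneg (u₀star x / |u₀star x|)]
  have hpt2 : ∀ x, β * (if u₀star x = 0 then |h₂ x|
      else h₂ x * (u₀star x / |u₀star x|)) - lam x * h₂ x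
      = if x ∈ B then β - |lam x| else 0 := by
    intro x
    by_cases hx : x ∈ B
    · have hx0 : u₀star x = 0 := hx.1
      have hlx : lam x ≠ 0 := by
        have : β < |lam x| := hx.2
        intro h0
        rw [h0, abs_zero] at this
        linarith
      simp only [hh₂def, if_pos hx, if_pos hx0]
      rw [abs_div, abs_abs, div_self (abs_ne_zero.mpr hlx)]
      rw [mul_div_assoc']
      rw [show lam x * lam x = |lam x| ^ 2 by rw [sq_abs]; ring]
      rw [sq, mul_div_assoc, div_self (abs_ne_zero.mpr hlx)]
      ring
    · simp only [hh₂def, if_neg hx]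
      by_cases hx0 : u₀star x = 0 <;> simp [hx0]
  have hFnonneg' : ∀ x, 0 ≤ (if x ∈ B then |lam x| - β else 0) := by
    intro x
    by_cases hx : x ∈ B
    · simp only [if_pos hx]
      have : β < |lam x| := hx.2
      linarith
    · simp [hx]
  have hzero2 : ∫ x, (if x ∈ B then |lam x| - β else 0) ∂μ = 0 := by
    have hk := keyB h₂ h₂mem
    have h2 : 0 ≤ ∫ x, (β * (if u₀star x = 0 then |h₂ x|
        else h₂ x * (u₀star x / |u₀star x|)) - lam x * h₂ x) ∂μ := by
      rw [integral_sub (hD₂int.const_mul β) hint2, integral_const_mul]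
      linarith
    have h3 : ∫ x, (β * (if u₀star x = 0 then |h₂ x|
        else h₂ x * (u₀star x / |u₀star x|)) - lam x * h₂ x) ∂μ
        = - ∫ x, (if x ∈ B then |lam x| - β else 0) ∂μ := by
      rw [← integral_neg]
      refine integral_congr_ae (Eventually.of_forall fun x => ?_)
      simp only [hpt2 x]
      by_cases hx : x ∈ B <;> simp [hx]
    have hFnonneg : ∀ x, 0 ≤ (if x ∈ B then |lam x| - β else 0) := by
      intro x
      by_cases hx : x ∈ B
      · simp only [if_pos hx]
        have : β < |lam x| := hx.2
        linarith
      · simp [hx]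
    have h4 : 0 ≤ ∫ x, (if x ∈ B then |lam x| - β else 0) ∂μ :=
      integral_nonneg hFnonneg
    linarith
  have hFint : Integrable (fun x => if x ∈ B then |lam x| - β else 0) μ := by
    have hgint : Integrable (fun x => |lam x| + β) μ :=
      (hlam_mem.integrable one_le_two).abs.add (integrable_const β)
    refine Integrable.mono hgint
      (Measurable.ite hBmeas (hlam_meas.abs.sub measurable_const)
        measurable_const).aestronglyMeasurable
      (Eventually.of_forall fun x => ?_)
    simp only [Real.norm_eq_abs]
    by_cases hx : x ∈ B
    · simp only [if_pos hx]
      have h1 : |(|lam x| - β)| ≤ |lam x| + β := by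
        rw [abs_sub_le_iff]
        constructor <;> nlinarith [abs_nonneg (lam x)]
      calc |(|lam x| - β)| ≤ |lam x| + β := h1
        _ ≤ |(|lam x| + β)| := le_abs_self _
    · simp only [if_neg hx, abs_zero]
      have : (0:ℝ) ≤ |lam x| + β := by positivity
      rw [abs_of_nonneg this]
      exact this
  have hae2 : ∀ᵐ x ∂μ, x ∉ B := by
    have hFz := (integral_eq_zero_iff_of_nonneg hFnonneg' hFint).mp hzero2
    filter_upwards [hFz] with x hx
    intro hxB
    have h1 : (if x ∈ B then |lam x| - β else 0) = 0 := hx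
    rw [if_pos hxB] at h1
    have : β < |lam x| := hxB.2
    linarith
  filter_upwards [hae1, hae2] with x hx1 hx2
  have hmain : u₀star x ≠ 0 → lam x = β * u₀star x / |u₀star x| := by
    intro hfx
    have h1 := hx1
    simp only [hh₁def, if_neg hfx] at h1
    rw [_root_.mul_div_assoc]
    linarith
  constructor
  · by_cases hfx : u₀star x = 0
    · by_contra hcon
      push_neg at hcon
      exact hx2 ⟨hfx, hcon⟩
    · rw [hmain hfx, abs_div, abs_mul, abs_of_pos hβ, abs_abs,
        _root_.mul_div_assoc, div_self (abs_ne_zero.mpr hfx), mul_one]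
  · exact hmain
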